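/- L_1(x) = x^q + a x is a permutation polynomial over F_{q^n} if and only if (-1)^n · N(a) ≠ 1, where N is the absolute norm from F_{q^n} to F_q. Under this condition, L_1^{-1}(x) = [N(a)/(N(a) + (-1)^{n-1})] · Σ_{i=0}^{n-1} (-1)^i a^{-(q^{i+1}-1)/(q-1)} x^{q^i}. -/

import Mathlib

private theorem geom_aux6 (q : ℕ) (hq : 2 ≤ q) (m : ℕ) :
    (∑ j ∈ Finset.range m, q ^ j) * (q - 1) = q ^ m - 1 := by
  induction m with
  | zero => simp
  | succ m ih =>
    rw [Finset.sum_range_succ, add_mul, ih, Nat.mul_sub, mul_one, ← pow_succ]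
    have h1 : 1 ≤ q ^ m := Nat.one_le_pow _ _ (by omega)
    have h4 : q ^ m ≤ q ^ (m + 1) := Nat.pow_le_pow_right (by omega) (by omega)
    omega

private theorem geom_div6 (q : ℕ) (hq : 2 ≤ q) (m : ℕ) :
    (q ^ m - 1) / (q - 1) = ∑ j ∈ Finset.range m, q ^ j :=
  Nat.div_eq_of_eq_mul_left (by omega) (geom_aux6 q hq m).symm

theorem stmt_6 (q n : ℕ) (hq : IsPrimePow q) (hn : 0 < n)
    (F : Type*) [Field F] [Fintype F] (hF : Fintype.card F = q ^ n)
    (a : F) (ha : a ≠ 0) (N : F) (hN : N = a ^ ((q ^ n - 1) / (q - 1))) :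
    (Function.Bijective (fun x : F => x ^ q + a * x) ↔ (-1 : F) ^ n * N ≠ 1) ∧
    ((-1 : F) ^ n * N ≠ 1 →
      ∀ x : F,
        (N / (N + (-1) ^ (n - 1)) *
            ∑ i ∈ Finset.range n,
              (-1 : F) ^ i * a⁻¹ ^ ((q ^ (i + 1) - 1) / (q - 1)) * x ^ q ^ i) ^ q
          + a * (N / (N + (-1) ^ (n - 1)) *
            ∑ i ∈ Finset.range n,
              (-1 : F) ^ i * a⁻¹ ^ ((q ^ (i + 1) - 1) / (q - 1)) * x ^ q ^ i) = x ∧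
        N / (N + (-1) ^ (n - 1)) *
            ∑ i ∈ Finset.range n,
              (-1 : F) ^ i * a⁻¹ ^ ((q ^ (i + 1) - 1) / (q - 1)) * (x ^ q + a * x) ^ q ^ i
          = x) := by
  classical
  have hq2 : 2 ≤ q := hq.two_le
  obtain ⟨n', rfl⟩ : ∃ n', n = n' + 1 := ⟨n - 1, by omega⟩
  clear hn
  simp only [Nat.add_sub_cancel, geom_div6 q hq2] at hN ⊢
  obtain ⟨p, k, hp0, hk, hpk⟩ := hq
  have hp : p.Prime := hp0.nat_prime
  haveI : Fact p.Prime := ⟨hp⟩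
  -- characteristic
  obtain ⟨m, hrp, hrcard⟩ := FiniteField.card F (ringChar F)
  have hpr : p = ringChar F := by
    have h1 : p ∣ Fintype.card F := by
      rw [hF, ← hpk, ← pow_mul]
      exact dvd_pow_self p (by positivity)
    rw [hrcard] at h1
    exact (Nat.prime_dvd_prime_iff_eq hp hrp).mp (hp.dvd_of_dvd_pow h1)
  haveI hcharP : CharP F p := hpr ▸ ringChar.charP F
  -- basic frobenius facts
  have hadd : ∀ (m : ℕ) (u v : F), (u + v) ^ q ^ m = u ^ q ^ m + v ^ q ^ m := by
    intro m u v
    rw [← hpk, ← pow_mul]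
    exact add_pow_char_pow u v p (k * m)
  have hadd1 : ∀ u v : F, (u + v) ^ q = u ^ q + v ^ q := by
    intro u v
    have := hadd 1 u v
    rwa [pow_one] at this
  have hsumq : ∀ (s : Finset ℕ) (f : ℕ → F), (∑ i ∈ s, f i) ^ q = ∑ i ∈ s, (f i) ^ q := by
    intro s f
    rw [← hpk]
    exact sum_pow_char_pow p k s f
  have hneg1 : ∀ (m : ℕ), (-1 : F) ^ q ^ m = -1 := by
    intro m
    rw [← hpk, ← pow_mul]
    exact neg_one_pow_char_pow F p (k * m)
  have hneg1' : (-1 : F) ^ q = -1 := by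
    have := hneg1 1
    rwa [pow_one] at this
  have hxqn : ∀ x : F, x ^ q ^ (n' + 1) = x := by
    intro x; rw [← hF]; exact FiniteField.pow_card x
  have hcard1 : ∀ x : F, x ≠ 0 → x ^ (q ^ (n' + 1) - 1) = 1 := by
    intro x hx
    have := FiniteField.pow_card_sub_one_eq_one x hx
    rwa [hF] at this
  -- nat exponent facts
  have hs_succ : ∀ i : ℕ, (∑ j ∈ Finset.range (i + 2), q ^ j)
      = (∑ j ∈ Finset.range (i + 1), q ^ j) * q + 1 := by
    intro i
    rw [Finset.sum_range_succ' (fun j => q ^ j) (i + 1)]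
    simp [pow_succ, ← Finset.sum_mul]
  have htq : (∑ j ∈ Finset.range (n' + 1), q ^ j) * q
      = (q ^ (n' + 1) - 1) + ∑ j ∈ Finset.range (n' + 1), q ^ j := by
    have h := geom_aux6 q hq2 (n' + 1)
    have h2 : (∑ j ∈ Finset.range (n' + 1), q ^ j) * q
        = (∑ j ∈ Finset.range (n' + 1), q ^ j) * (q - 1)
          + ∑ j ∈ Finset.range (n' + 1), q ^ j := by
      rw [Nat.mul_sub, mul_one]
      have : (∑ j ∈ Finset.range (n' + 1), q ^ j) ≤ (∑ j ∈ Finset.range (n' + 1), q ^ j) * q :=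
        Nat.le_mul_of_pos_right _ (by omega)
      omega
    omega
  -- field facts about a and N
  have hNne : N ≠ 0 := by rw [hN]; exact pow_ne_zero _ ha
  have haT : a⁻¹ ^ (∑ j ∈ Finset.range (n' + 1), q ^ j) = N⁻¹ := by rw [hN, inv_pow]
  have hNq : N ^ q = N := by
    rw [hN, ← pow_mul, htq, pow_add, hcard1 a ha, one_mul]
  have hbq : ∀ i : ℕ, a * a⁻¹ ^ (∑ j ∈ Finset.range (i + 2), q ^ j)
      = (a⁻¹ ^ (∑ j ∈ Finset.range (i + 1), q ^ j)) ^ q := by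
    intro i
    rw [hs_succ i, pow_add, pow_mul, pow_one, mul_comm a, mul_assoc, inv_mul_cancel₀ ha, mul_one]
  have hbN : (a⁻¹ ^ (∑ j ∈ Finset.range (n' + 1), q ^ j)) ^ q = N⁻¹ := by
    rw [← pow_mul, htq, pow_add, hcard1 a⁻¹ (inv_ne_zero ha), one_mul, haT]
  have hba : ∀ i : ℕ, a⁻¹ ^ (∑ j ∈ Finset.range (i + 2), q ^ j) * a ^ q ^ (i + 1)
      = a⁻¹ ^ (∑ j ∈ Finset.range (i + 1), q ^ j) := by
    intro i
    rw [Finset.sum_range_succ (fun j => q ^ j) (i + 1), pow_add, mul_assoc, ← mul_pow,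
      inv_mul_cancel₀ ha, one_pow, mul_one]
  -- Lemma A : L(S x) = (1 + e N⁻¹) x
  have keyA : ∀ x : F,
      (∑ i ∈ Finset.range (n' + 1),
          (-1 : F) ^ i * a⁻¹ ^ (∑ j ∈ Finset.range (i + 1), q ^ j) * x ^ q ^ i) ^ q
        + a * (∑ i ∈ Finset.range (n' + 1),
          (-1 : F) ^ i * a⁻¹ ^ (∑ j ∈ Finset.range (i + 1), q ^ j) * x ^ q ^ i)
      = (1 + (-1 : F) ^ n' * N⁻¹) * x := by
    intro x
    rw [hsumq, Finset.mul_sum]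
    have e1 : ∀ i ∈ Finset.range (n' + 1),
        ((-1 : F) ^ i * a⁻¹ ^ (∑ j ∈ Finset.range (i + 1), q ^ j) * x ^ q ^ i) ^ q
        = (-1 : F) ^ i * (a⁻¹ ^ (∑ j ∈ Finset.range (i + 1), q ^ j)) ^ q * x ^ q ^ (i + 1) := by
      intro i _
      rw [mul_pow, mul_pow, ← pow_mul x, ← pow_succ, pow_right_comm, hneg1']
    rw [Finset.sum_congr rfl e1, Finset.sum_range_succ
      (fun i => (-1 : F) ^ i * (a⁻¹ ^ (∑ j ∈ Finset.range (i + 1), q ^ j)) ^ q * x ^ q ^ (i + 1)),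
      Finset.sum_range_succ'
      (fun i => a * ((-1 : F) ^ i * a⁻¹ ^ (∑ j ∈ Finset.range (i + 1), q ^ j) * x ^ q ^ i))]
    have hsplit : (∑ i ∈ Finset.range n',
          (-1 : F) ^ i * (a⁻¹ ^ (∑ j ∈ Finset.range (i + 1), q ^ j)) ^ q * x ^ q ^ (i + 1))
        + (∑ i ∈ Finset.range n',
          a * ((-1 : F) ^ (i + 1) * a⁻¹ ^ (∑ j ∈ Finset.range (i + 1 + 1), q ^ j) * x ^ q ^ (i + 1)))
        = 0 := by
      rw [← Finset.sum_add_distrib]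
      apply Finset.sum_eq_zero
      intro i _
      have h := hbq i
      calc (-1 : F) ^ i * (a⁻¹ ^ (∑ j ∈ Finset.range (i + 1), q ^ j)) ^ q * x ^ q ^ (i + 1)
          + a * ((-1 : F) ^ (i + 1) * a⁻¹ ^ (∑ j ∈ Finset.range (i + 1 + 1), q ^ j) * x ^ q ^ (i + 1))
          = (-1 : F) ^ i * (a⁻¹ ^ (∑ j ∈ Finset.range (i + 1), q ^ j)) ^ q * x ^ q ^ (i + 1)
            - (-1 : F) ^ i * (a * a⁻¹ ^ (∑ j ∈ Finset.range (i + 2), q ^ j)) * x ^ q ^ (i + 1) := by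
            ring
        _ = 0 := by rw [h]; ring
    have hTn : (-1 : F) ^ n' * (a⁻¹ ^ (∑ j ∈ Finset.range (n' + 1), q ^ j)) ^ q
        * x ^ q ^ (n' + 1) = (-1 : F) ^ n' * N⁻¹ * x := by
      rw [hbN, hxqn]
    have hg0 : a * ((-1 : F) ^ 0 * a⁻¹ ^ (∑ j ∈ Finset.range (0 + 1), q ^ j) * x ^ q ^ 0) = x := by
      simp [mul_inv_cancel₀ ha]
      rw [← mul_assoc, mul_inv_cancel₀ ha, one_mul]
    linear_combination hsplit + hTn + hg0
  -- Lemma B : S(L x) = (1 + e N⁻¹) x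
  have keyB : ∀ x : F,
      (∑ i ∈ Finset.range (n' + 1),
          (-1 : F) ^ i * a⁻¹ ^ (∑ j ∈ Finset.range (i + 1), q ^ j) * (x ^ q + a * x) ^ q ^ i)
      = (1 + (-1 : F) ^ n' * N⁻¹) * x := by
    intro x
    have e2 : ∀ i ∈ Finset.range (n' + 1),
        (-1 : F) ^ i * a⁻¹ ^ (∑ j ∈ Finset.range (i + 1), q ^ j) * (x ^ q + a * x) ^ q ^ i
        = (-1 : F) ^ i * a⁻¹ ^ (∑ j ∈ Finset.range (i + 1), q ^ j) * x ^ q ^ (i + 1)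
          + (-1 : F) ^ i * (a⁻¹ ^ (∑ j ∈ Finset.range (i + 1), q ^ j) * a ^ q ^ i) * x ^ q ^ i := by
      intro i _
      rw [hadd i (x ^ q) (a * x), ← pow_mul, ← pow_succ', mul_pow]
      ring
    rw [Finset.sum_congr rfl e2, Finset.sum_add_distrib, Finset.sum_range_succ
      (fun i => (-1 : F) ^ i * a⁻¹ ^ (∑ j ∈ Finset.range (i + 1), q ^ j) * x ^ q ^ (i + 1)),
      Finset.sum_range_succ'
      (fun i => (-1 : F) ^ i * (a⁻¹ ^ (∑ j ∈ Finset.range (i + 1), q ^ j) * a ^ q ^ i) * x ^ q ^ i)]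
    have hsplit : (∑ i ∈ Finset.range n',
          (-1 : F) ^ i * a⁻¹ ^ (∑ j ∈ Finset.range (i + 1), q ^ j) * x ^ q ^ (i + 1))
        + (∑ i ∈ Finset.range n',
          (-1 : F) ^ (i + 1) * (a⁻¹ ^ (∑ j ∈ Finset.range (i + 1 + 1), q ^ j) * a ^ q ^ (i + 1))
            * x ^ q ^ (i + 1)) = 0 := by
      rw [← Finset.sum_add_distrib]
      apply Finset.sum_eq_zero
      intro i _
      have h := hba i
      calc (-1 : F) ^ i * a⁻¹ ^ (∑ j ∈ Finset.range (i + 1), q ^ j) * x ^ q ^ (i + 1)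
          + (-1 : F) ^ (i + 1) * (a⁻¹ ^ (∑ j ∈ Finset.range (i + 1 + 1), q ^ j) * a ^ q ^ (i + 1))
            * x ^ q ^ (i + 1)
          = (-1 : F) ^ i * a⁻¹ ^ (∑ j ∈ Finset.range (i + 1), q ^ j) * x ^ q ^ (i + 1)
            - (-1 : F) ^ i * (a⁻¹ ^ (∑ j ∈ Finset.range (i + 2), q ^ j) * a ^ q ^ (i + 1))
              * x ^ q ^ (i + 1) := by ring
        _ = 0 := by rw [h]; ring
    have hUn : (-1 : F) ^ n' * a⁻¹ ^ (∑ j ∈ Finset.range (n' + 1), q ^ j) * x ^ q ^ (n' + 1)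
        = (-1 : F) ^ n' * N⁻¹ * x := by rw [haT, hxqn]
    have hV0 : (-1 : F) ^ 0 * (a⁻¹ ^ (∑ j ∈ Finset.range (0 + 1), q ^ j) * a ^ q ^ 0) * x ^ q ^ 0
        = x := by
      simp
      rw [inv_mul_cancel₀ ha, one_mul]
    linear_combination hsplit + hUn + hV0
  -- part 2
  have part2 : (-1 : F) ^ (n' + 1) * N ≠ 1 →
      ∀ x : F,
        (N / (N + (-1) ^ n') *
            ∑ i ∈ Finset.range (n' + 1),
              (-1 : F) ^ i * a⁻¹ ^ (∑ j ∈ Finset.range (i + 1), q ^ j) * x ^ q ^ i) ^ q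
          + a * (N / (N + (-1) ^ n') *
            ∑ i ∈ Finset.range (n' + 1),
              (-1 : F) ^ i * a⁻¹ ^ (∑ j ∈ Finset.range (i + 1), q ^ j) * x ^ q ^ i) = x ∧
        N / (N + (-1) ^ n') *
            ∑ i ∈ Finset.range (n' + 1),
              (-1 : F) ^ i * a⁻¹ ^ (∑ j ∈ Finset.range (i + 1), q ^ j) * (x ^ q + a * x) ^ q ^ i
          = x := by
    intro hne x
    have hden : N + (-1 : F) ^ n' ≠ 0 := by
      intro h
      apply hne
      have hNe : N = -(-1 : F) ^ n' := by linear_combination h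
      rw [hNe, pow_succ]
      calc (-1 : F) ^ n' * (-1) * -(-1 : F) ^ n' = ((-1 : F) * (-1)) ^ n' := by
            rw [mul_pow]; ring
        _ = 1 := by norm_num
    have hc : N / (N + (-1 : F) ^ n') * (1 + (-1 : F) ^ n' * N⁻¹) = 1 := by
      rw [div_mul_eq_mul_div, div_eq_one_iff_eq hden, mul_add, mul_one,
        mul_comm ((-1 : F) ^ n') N⁻¹, ← mul_assoc, mul_inv_cancel₀ hNne, one_mul]
    have heq : ((-1 : F) ^ n') ^ q = (-1 : F) ^ n' := by rw [pow_right_comm, hneg1']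
    have hcq : (N / (N + (-1 : F) ^ n')) ^ q = N / (N + (-1 : F) ^ n') := by
      rw [div_pow, hadd1, hNq, heq]
    constructor
    · rw [mul_pow, hcq]
      linear_combination (N / (N + (-1 : F) ^ n')) * keyA x + x * hc
    · linear_combination (N / (N + (-1 : F) ^ n')) * keyB x + x * hc
  refine ⟨⟨?_, ?_⟩, part2⟩
  · -- bijective → condition
    intro hbij
    intro hcon
    -- build z with z^(q-1) = -a
    have hneg1t : (-1 : F) ^ (∑ j ∈ Finset.range (n' + 1), q ^ j) = (-1 : F) ^ (n' + 1) := by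
      rw [← Finset.prod_pow_eq_pow_sum]
      simp [hneg1]
    have hma : (-a) ^ (∑ j ∈ Finset.range (n' + 1), q ^ j) = 1 := by
      rw [neg_pow, hneg1t, ← hN]
      exact hcon
    set t := ∑ j ∈ Finset.range (n' + 1), q ^ j with ht
    have ht1 : 0 < t := by
      rw [ht]
      exact Finset.sum_pos (fun j _ => pow_pos (by omega) j)
        (Finset.nonempty_range_iff.mpr (by omega))
    let u : Fˣ := Units.mk0 (-a) (neg_ne_zero.mpr ha)
    have hu : u ^ t = 1 := by
      ext
      push_cast
      exact hma
    obtain ⟨g, hg⟩ := IsCyclic.exists_generator (α := Fˣ)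
    have hog : orderOf g = q ^ (n' + 1) - 1 := by
      rw [orderOf_eq_card_of_forall_mem_zpowers hg, Nat.card_eq_fintype_card,
        Fintype.card_units, hF]
    obtain ⟨mz, hmz⟩ := Subgroup.mem_zpowers_iff.mp (hg u)
    have h1 : g ^ (mz * (t : ℤ)) = 1 := by
      rw [zpow_mul, hmz, zpow_natCast, hu]
    have h2 : ((q ^ (n' + 1) - 1 : ℕ) : ℤ) ∣ mz * (t : ℤ) := by
      rw [← hog]
      exact orderOf_dvd_iff_zpow_eq_one.mpr h1
    have h3 : ((q - 1 : ℕ) : ℤ) ∣ mz := by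
      have hgeo : (q ^ (n' + 1) - 1 : ℕ) = t * (q - 1) := (geom_aux6 q hq2 (n' + 1)).symm
      rw [hgeo, Nat.cast_mul, mul_comm mz] at h2
      exact (mul_dvd_mul_iff_left (show (t : ℤ) ≠ 0 by exact_mod_cast ht1.ne')).mp h2
    obtain ⟨d, hd⟩ := h3
    set w : Fˣ := g ^ d with hw
    have hzq : (w : F) ^ (q - 1) = -a := by
      have : w ^ ((q - 1 : ℕ) : ℤ) = u := by
        rw [hw, ← zpow_mul, mul_comm, ← hd, hmz]
      have h6 : w ^ (q - 1) = u := by rwa [zpow_natCast] at this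
      calc (w : F) ^ (q - 1) = ((w ^ (q - 1) : Fˣ) : F) := by push_cast; ring
        _ = -a := by rw [h6]; rfl
    have hLz : (fun x : F => x ^ q + a * x) (w : F) = (fun x : F => x ^ q + a * x) 0 := by
      simp only
      have hq1 : q - 1 + 1 = q := by omega
      rw [zero_pow (by omega : q ≠ 0), mul_zero, add_zero, ← hq1, pow_succ, hzq]
      ring
    exact w.ne_zero (hbij.injective hLz)
  · -- condition → bijective
    intro hne
    have hsurj : Function.Surjective (fun x : F => x ^ q + a * x) := by
      intro y
      exact ⟨N / (N + (-1) ^ n') *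
          ∑ i ∈ Finset.range (n' + 1),
            (-1 : F) ^ i * a⁻¹ ^ (∑ j ∈ Finset.range (i + 1), q ^ j) * y ^ q ^ i,
        (part2 hne y).1⟩
    exact Finite.surjective_iff_bijective.mp hsurj
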